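/- Let char F ≠ 2, B and B' central simple division algebras over F, σ ∈ Aut_F(B), φ ∈ Aut_F(B') nontrivial, c ∈ B^×, d ∈ B'^×. Then G : D(B,σ,c) → D(B',φ,d) is an F-algebra isomorphism if and only if G(x,y) = (τ(x), τ(y)b) for some F-isomorphism τ : B → B' with φ∘τ = τ∘σ and some b ∈ F^× with τ(c) = d·b². -/

import Mathlib

/-- The Dickson doubling multiplication on `B ⊕ B`. -/
def dicksonMul {B : Type*} [Ring B] (σ : B → B) (c : B) (p q : B × B) : B × B :=
  (p.1 * q.1 + c * σ (p.2 * q.2), p.1 * q.2 + p.2 * q.1)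

/-- `G` is an isomorphism of `F`-algebras `D(B,σ,c) → D(B',φ,d)`:
a bijective `F`-linear multiplicative map. -/
def IsDicksonIso (F : Type*) {B B' : Type*} [Field F] [Ring B] [Ring B']
    [Algebra F B] [Algebra F B'] (σ : B → B) (c : B) (φ : B' → B') (d : B')
    (G : B × B → B' × B') : Prop :=
  Function.Bijective G ∧ (∀ p q : B × B, G (p + q) = G p + G q) ∧
    (∀ (a : F) (p : B × B), G (a • p) = a • G p) ∧
    (∀ p q : B × B, G (dicksonMul σ c p q) = dicksonMul φ d (G p) (G q))

section dicksonAux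

variable {F : Type*} [Field F]

lemma dickson_mid_assoc {A : Type*} [Ring A] [Algebra F A] (ψ : A ≃ₐ[F] A) (e s : A)
    (p q : A × A) :
    dicksonMul (⇑ψ) e (dicksonMul (⇑ψ) e p (s, 0)) q
      = dicksonMul (⇑ψ) e p (dicksonMul (⇑ψ) e (s, 0) q) := by
  simp [dicksonMul, mul_assoc, map_mul, mul_add]

lemma dickson_snd_zero {A : Type*} [DivisionRing A] [Algebra F A]
    (ψ : A ≃ₐ[F] A) (hψ : ψ ≠ AlgEquiv.refl) (e : A) (he : e ≠ 0) (n : A × A)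
    (h : ∀ p q : A × A, dicksonMul (⇑ψ) e (dicksonMul (⇑ψ) e p n) q
      = dicksonMul (⇑ψ) e p (dicksonMul (⇑ψ) e n q)) :
    n.2 = 0 := by
  by_contra ht
  have hψt : ψ n.2 ≠ 0 := fun h0 => ht (by simpa using ψ.injective (h0.trans (map_zero ψ).symm))
  have h2 : e * ψ n.2 ≠ 0 := mul_ne_zero he hψt
  apply hψ
  refine AlgEquiv.ext fun y => ?_
  have h3 := congrArg Prod.fst (h (0, 1) (y, 0))
  simp only [dicksonMul, zero_mul, mul_zero, one_mul, mul_one, zero_add, add_zero,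
    map_zero, map_one, map_mul, mul_assoc] at h3
  rw [← mul_assoc, ← mul_assoc] at h3
  exact (mul_left_cancel₀ h2 h3).symm

end dicksonAux

theorem stmt19 (F B B' : Type*) [Field F] [DivisionRing B] [DivisionRing B']
    [Algebra F B] [Algebra F B'] [FiniteDimensional F B] [FiniteDimensional F B']
    [Algebra.IsCentral F B] [Algebra.IsCentral F B'] (hF : ringChar F ≠ 2)
    (σ : B ≃ₐ[F] B) (hσ : σ ≠ AlgEquiv.refl) (φ : B' ≃ₐ[F] B') (hφ : φ ≠ AlgEquiv.refl)
    (c : B) (hc : c ≠ 0) (d : B') (hd : d ≠ 0) (G : B × B → B' × B') :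
    IsDicksonIso F σ c φ d G ↔
      ∃ (τ : B ≃ₐ[F] B') (b : F), b ≠ 0 ∧ (∀ x : B, φ (τ x) = τ (σ x)) ∧
        τ c = d * algebraMap F B' (b ^ 2) ∧
        ∀ p : B × B, G p = (τ p.1, τ p.2 * algebraMap F B' b) := by
  constructor
  · rintro ⟨⟨hinj, hsurj⟩, hadd, hsmul, hmul⟩
    -- G 0 = 0
    have hG0 : G 0 = 0 := by
      have := hsmul 0 0
      simpa using this
    -- G (1,0) = (1,0)
    have hG1 : G (1, 0) = (1, 0) := by
      have hl : ∀ q : B' × B', dicksonMul (⇑φ) d (G (1, 0)) q = q := by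
        intro q
        obtain ⟨p, rfl⟩ := hsurj q
        rw [← hmul]
        congr 1
        simp [dicksonMul]
      have h1 : dicksonMul (⇑φ) d (G (1, 0)) ((1 : B'), (0 : B')) = G (1, 0) := by
        simp [dicksonMul]
      rw [hl] at h1
      exact h1.symm
    -- second components vanish on B × 0
    have hsnd : ∀ x : B, (G (x, 0)).2 = 0 := by
      intro x
      refine dickson_snd_zero φ hφ d hd _ fun p q => ?_
      obtain ⟨p1, rfl⟩ := hsurj p
      obtain ⟨p2, rfl⟩ := hsurj q
      rw [← hmul, ← hmul, ← hmul, ← hmul, dickson_mid_assoc σ c x]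
    set τ0 : B → B' := fun x => (G (x, 0)).1 with hτ0
    have hGx : ∀ x : B, G (x, 0) = (τ0 x, 0) := fun x => Prod.ext rfl (hsnd x)
    -- properties of τ0
    have hτadd : ∀ x y : B, τ0 (x + y) = τ0 x + τ0 y := by
      intro x y
      have := congrArg Prod.fst (hadd (x, 0) (y, 0))
      simpa [hGx] using this
    have hτmul : ∀ x y : B, τ0 (x * y) = τ0 x * τ0 y := by
      intro x y
      have h1 : dicksonMul (⇑σ) c (x, 0) (y, 0) = (x * y, 0) := by simp [dicksonMul]
      have := hmul (x, 0) (y, 0)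
      rw [h1, hGx, hGx, hGx] at this
      have := congrArg Prod.fst this
      simpa [dicksonMul] using this
    have hτone : τ0 1 = 1 := by
      have := congrArg Prod.fst hG1
      simpa [hGx] using this
    have hτzero : τ0 0 = 0 := by
      have := congrArg Prod.fst hG0
      exact this
    have hτcommF : ∀ a : F, τ0 (algebraMap F B a) = algebraMap F B' a := by
      intro a
      have h1 : ((algebraMap F B a, (0 : B)) : B × B) = a • ((1 : B), (0 : B)) := by
        simp [Prod.smul_def, Algebra.algebraMap_eq_smul_one]
      have := hsmul a ((1 : B), (0 : B))
      rw [← h1, hG1, hGx] at this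
      have := congrArg Prod.fst this
      simpa [Algebra.algebraMap_eq_smul_one] using this
    have hτinj : Function.Injective τ0 := by
      intro x y hxy
      have : G (x, 0) = G (y, 0) := by rw [hGx, hGx, hxy]
      exact congrArg Prod.fst (hinj this)
    have hτsurj : Function.Surjective τ0 := by
      intro z
      obtain ⟨p, hp⟩ := hsurj (z, 0)
      have hp2 : p.2 = 0 := by
        refine dickson_snd_zero σ hσ c hc _ fun q1 q2 => ?_
        apply hinj
        rw [hmul, hmul, hmul, hmul, hp, dickson_mid_assoc φ d z]
      refine ⟨p.1, ?_⟩
      have : G (p.1, 0) = (z, 0) := by rw [← hp2, Prod.mk.eta, hp]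
      rw [hGx] at this
      exact congrArg Prod.fst this
    -- assemble the algebra isomorphism
    let τalg : B →ₐ[F] B' :=
      { toFun := τ0, map_one' := hτone, map_mul' := hτmul, map_zero' := hτzero,
        map_add' := hτadd, commutes' := hτcommF }
    let τ : B ≃ₐ[F] B' := AlgEquiv.ofBijective τalg ⟨hτinj, hτsurj⟩
    have hτeq : ∀ x : B, τ x = τ0 x := fun x => rfl
    -- G (0,1) = (a1, β1) with a1, β1 central
    obtain ⟨⟨a1, β1⟩, hG01⟩ : ∃ q : B' × B', G ((0 : B), (1 : B)) = q := ⟨_, rfl⟩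
    have hcent : ∀ x : B, τ0 x * a1 = a1 * τ0 x ∧ τ0 x * β1 = β1 * τ0 x := by
      intro x
      have h1 : dicksonMul (⇑σ) c (x, 0) (0, 1) = dicksonMul (⇑σ) c (0, 1) (x, 0) := by
        simp [dicksonMul]
      have h2 : dicksonMul (⇑φ) d (G (x, 0)) (G (0, 1))
          = dicksonMul (⇑φ) d (G (0, 1)) (G (x, 0)) := by
        rw [← hmul, ← hmul, h1]
      rw [hGx, hG01] at h2
      simpa [dicksonMul, Prod.ext_iff] using h2
    have hacent : a1 ∈ Subalgebra.center F B' := by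
      rw [Subalgebra.mem_center_iff]
      intro z
      obtain ⟨x, rfl⟩ := hτsurj z
      exact (hcent x).1
    have hbcent : β1 ∈ Subalgebra.center F B' := by
      rw [Subalgebra.mem_center_iff]
      intro z
      obtain ⟨x, rfl⟩ := hτsurj z
      exact (hcent x).2
    obtain ⟨a0, ha0⟩ := Algebra.mem_bot.mp (Algebra.IsCentral.out hacent)
    obtain ⟨b0, hb0'⟩ := Algebra.mem_bot.mp (Algebra.IsCentral.out hbcent)
    -- square relation
    have hsq : ((τ0 c : B'), (0 : B')) = (a1 * a1 + d * φ (β1 * β1), a1 * β1 + β1 * a1) := by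
      have h1 : dicksonMul (⇑σ) c ((0 : B), (1 : B)) (0, 1) = (c, 0) := by
        simp [dicksonMul]
      have h2 := hmul ((0 : B), (1 : B)) (0, 1)
      rw [h1, hGx, hG01] at h2
      simpa [dicksonMul] using h2
    have halginj : Function.Injective (algebraMap F B') := RingHom.injective _
    have hab0 : a0 * b0 = 0 := by
      have h2 := congrArg Prod.snd hsq
      simp only [Prod.snd] at h2
      rw [← ha0, ← hb0', ← map_mul, ← map_mul, ← map_add] at h2
      have h3 : a0 * b0 + b0 * a0 = 0 := by
        apply halginj
        rw [map_zero]
        exact h2.symm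
      have h4 : (2 : F) * (a0 * b0) = 0 := by linear_combination h3
      have h2ne : (2 : F) ≠ 0 := Ring.two_ne_zero hF
      exact (mul_eq_zero.mp h4).resolve_left h2ne
    have hb0ne : b0 ≠ 0 := by
      intro hb0z
      have hβz : β1 = 0 := by rw [← hb0', hb0z, map_zero]
      obtain ⟨x0, hx0⟩ := hτsurj a1
      have : ((x0 : B), (0 : B)) = ((0 : B), (1 : B)) := by
        apply hinj
        rw [hGx, hG01, hx0, hβz]
      exact one_ne_zero (congrArg Prod.snd this).symm
    have ha0z : a0 = 0 := by
      rcases mul_eq_zero.mp hab0 with h | h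
      · exact h
      · exact absurd h hb0ne
    have ha1z : a1 = 0 := by rw [← ha0, ha0z, map_zero]
    have hφβ : φ β1 = β1 := by rw [← hb0']; exact φ.commutes b0
    have hτc : τ0 c = d * algebraMap F B' (b0 ^ 2) := by
      have h1 := congrArg Prod.fst hsq
      simp only [Prod.fst] at h1
      rw [ha1z, zero_mul, zero_add, map_mul, hφβ, ← hb0', ← map_mul, ← sq] at h1
      exact h1
    -- form of G on 0 × B
    have hGy : ∀ y : B, G (0, y) = (0, τ0 y * β1) := by
      intro y
      have h1 : dicksonMul (⇑σ) c (y, 0) ((0 : B), (1 : B)) = (0, y) := by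
        simp [dicksonMul]
      have h2 := hmul (y, 0) ((0 : B), (1 : B))
      rw [h1, hGx, hG01] at h2
      simpa [dicksonMul, ha1z] using h2
    have hGform : ∀ p : B × B, G p = (τ0 p.1, τ0 p.2 * β1) := by
      intro p
      have h1 : p = (p.1, 0) + (0, p.2) := by simp
      rw [h1, hadd, hGx, hGy]
      simp
    -- intertwining
    have hb0sqne : (b0 ^ 2 : F) ≠ 0 := pow_ne_zero 2 hb0ne
    have hcommτ : ∀ y : B, φ (τ0 y) = τ0 (σ y) := by
      intro y
      have h1 : dicksonMul (⇑σ) c ((0 : B), (1 : B)) (0, y) = (c * σ y, 0) := by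
        simp [dicksonMul]
      have h2 := hmul ((0 : B), (1 : B)) (0, y)
      rw [h1, hGx, hG01, hGy, ha1z] at h2
      have h3 := congrArg Prod.fst h2
      simp only [dicksonMul, Prod.fst, zero_mul, mul_zero, add_zero, zero_add] at h3
      rw [hτmul, hτc, ← hb0'] at h3
      simp only [map_mul, map_smul, AlgEquiv.commutes, Algebra.algebraMap_eq_smul_one,
        smul_mul_assoc, mul_smul_comm, smul_smul, mul_one, one_mul, sq] at h3
      have h5 := smul_right_injective B' (mul_ne_zero hb0ne hb0ne) h3
      exact (mul_left_cancel₀ hd h5).symm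
    exact ⟨τ, b0, hb0ne, hcommτ, hτc, fun p => by rw [hGform, hb0']; rfl⟩
  · rintro ⟨τ, b, hb, hcomm, hτc, hGform⟩
    have hβ0 : (algebraMap F B' b) ≠ 0 := (map_ne_zero (algebraMap F B')).mpr hb
    refine ⟨?_, ?_, ?_, ?_⟩
    · rw [Function.bijective_iff_has_inverse]
      refine ⟨fun q => (τ.symm q.1, τ.symm (q.2 * (algebraMap F B' b)⁻¹)),
        fun p => ?_, fun q => ?_⟩
      · rw [hGform]
        simp [mul_assoc, mul_inv_cancel₀ hβ0]
      · rw [hGform]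
        simp [mul_assoc, inv_mul_cancel₀ hβ0]
    · intro p q
      rw [hGform, hGform, hGform]
      simp [Prod.ext_iff, map_add, add_mul]
    · intro a p
      rw [hGform, hGform]
      simp [Prod.ext_iff, Prod.smul_def, map_smul, smul_mul_assoc]
    · intro p q
      rw [hGform, hGform, hGform]
      obtain ⟨u, v⟩ := p
      obtain ⟨x, y⟩ := q
      simp only [dicksonMul, Prod.ext_iff, map_add, map_mul, hτc, hcomm,
        Algebra.algebraMap_eq_smul_one, map_smul, map_one, smul_mul_assoc, mul_smul_comm,
        smul_smul, mul_one, one_mul, sq, add_mul, mul_add, smul_add]
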